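/- arXiv:2402.06546 — 2 statements merged into one kernel-verified Lean document; each statement's English description precedes it below -/
import Mathlib

section
/- The weighting of a 2-coloured triangulation is invariant under 2-coloured flips: if two 2-coloured triangulations of a convex polygon are related by a 2-coloured flip, then for every vertex x of the polygon, the sums (mod 3) of the colours (±1) of the triangles incident with x agree. -/
namespace PolyFlip


/-- Two vertices of the convex `N`-gon are consecutive along the boundary. -/
def BdryAdj (N : ℕ) (i j : Fin N) : Prop :=
  (i.val + 1) % N = j.val ∨ (j.val + 1) % N = i.val

/-- `d` is a diagonal of the convex `N`-gon: an unordered pair of distinct,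
non-consecutive vertices. -/
def IsDiag (N : ℕ) (d : Finset (Fin N)) : Prop :=
  ∃ i j : Fin N, i ≠ j ∧ ¬ BdryAdj N i j ∧ d = {i, j}

/-- The chord `d` crosses the chord `e` (in this orientation): the endpoints
interlace in the cyclic (here: linear) order of the polygon's vertices. -/
def Crosses {N : ℕ} (d e : Finset (Fin N)) : Prop :=
  ∃ a b c f : Fin N, d = {a, b} ∧ e = {c, f} ∧ a < c ∧ c < b ∧ b < f

/-- A triangulation of the convex `N`-gon: a maximal set of pairwise
non-crossing diagonals. -/
structure Triangulation (N : ℕ) where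
  diags : Finset (Finset (Fin N))
  isDiag : ∀ d ∈ diags, IsDiag N d
  noncross : ∀ d ∈ diags, ∀ e ∈ diags, ¬ Crosses d e
  maximal : ∀ d, IsDiag N d → (∀ e ∈ diags, ¬ Crosses d e ∧ ¬ Crosses e d) → d ∈ diags

/-- `a` and `b` are joined by an edge of the triangulated polygon:
either a boundary edge, or a diagonal of the triangulation. -/
def IsEdge {N : ℕ} (T : Triangulation N) (a b : Fin N) : Prop :=
  a ≠ b ∧ (BdryAdj N a b ∨ ({a, b} : Finset (Fin N)) ∈ T.diags)

/-- `t` is a triangle (face) of the triangulation `T`. -/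
def IsTriangle {N : ℕ} (T : Triangulation N) (t : Finset (Fin N)) : Prop :=
  ∃ a b c : Fin N, a ≠ b ∧ a ≠ c ∧ b ≠ c ∧ t = {a, b, c} ∧
    IsEdge T a b ∧ IsEdge T a c ∧ IsEdge T b c

/-- A coloured triangulation: a triangulation together with a colour in
`Fin m` for each of its triangles. -/
structure ColouredTri (N m : ℕ) where
  T : Triangulation N
  col : {t : Finset (Fin N) // IsTriangle T t} → Fin m

/-- The degree of a vertex `x` in the triangulated polygon. -/
noncomputable def degree {N : ℕ} (T : Triangulation N) (x : Fin N) : ℕ :=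
  Nat.card {y : Fin N // IsEdge T x y}

/-- The `σ`-flip at the diagonal `d`: `d = {a,b}` is a diagonal of `C` whose two
incident triangles `{a,b,x}` and `{a,b,y}` have the same colour `i`; it is replaced by
the other diagonal `{x,y}` of the quadrilateral, the two new triangles `{a,x,y}` and
`{b,x,y}` get colour `σ i`, and all other triangles keep their colours. -/
def SFlipAt {N m : ℕ} (σ : Equiv.Perm (Fin m)) (d : Finset (Fin N))
    (C C' : ColouredTri N m) : Prop :=
  ∃ (a b x y : Fin N) (h₁ : IsTriangle C.T {a, b, x}) (h₂ : IsTriangle C.T {a, b, y})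
    (h₁' : IsTriangle C'.T {a, x, y}) (h₂' : IsTriangle C'.T {b, x, y}),
    d = {a, b} ∧ d ∈ C.T.diags ∧ x ≠ y ∧
    C.col ⟨{a, b, x}, h₁⟩ = C.col ⟨{a, b, y}, h₂⟩ ∧
    C'.T.diags = insert {x, y} (C.T.diags.erase d) ∧
    C'.col ⟨{a, x, y}, h₁'⟩ = σ (C.col ⟨{a, b, x}, h₁⟩) ∧
    C'.col ⟨{b, x, y}, h₂'⟩ = σ (C.col ⟨{a, b, x}, h₁⟩) ∧
    ∀ (t : Finset (Fin N)) (ht : IsTriangle C.T t) (ht' : IsTriangle C'.T t),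
      t ≠ {a, b, x} → t ≠ {a, b, y} → C'.col ⟨t, ht'⟩ = C.col ⟨t, ht⟩

/-- The `σ`-flip relation. -/
def SFlip {N m : ℕ} (σ : Equiv.Perm (Fin m)) (C C' : ColouredTri N m) : Prop :=
  ∃ d, SFlipAt σ d C C'

/-- The 2-coloured flip at a diagonal (the colour permutation swaps the two colours). -/
abbrev Flip2At {N : ℕ} (d : Finset (Fin N)) (C C' : ColouredTri N 2) : Prop :=
  SFlipAt (finRotate 2) d C C'

/-- The 2-coloured flip relation. -/
abbrev Flip2 {N : ℕ} (C C' : ColouredTri N 2) : Prop :=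
  SFlip (finRotate 2) C C'

/-- The 2-coloured flip graph of the convex `N`-gon: vertices are the 2-coloured
triangulations, edges are single 2-coloured flips. -/
def flipGraph (N : ℕ) : SimpleGraph (ColouredTri N 2) where
  Adj C C' := C ≠ C' ∧ (Flip2 C C' ∨ Flip2 C' C)
  symm := ⟨fun C C' h => ⟨h.1.symm, h.2.symm⟩⟩
  loopless := ⟨fun C h => h.1 rfl⟩

/-- The sign (`+1` for colour `0`, `-1` for colour `1`) of a colour, in `ZMod 3`. -/
def signVal (c : Fin 2) : ZMod 3 := if c = 0 then 1 else -1

/-- The weight of a vertex `x`: the sum, modulo 3, of the signs of all triangles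
incident with `x`. -/
noncomputable def weight {N : ℕ} (C : ColouredTri N 2) (x : Fin N) : ZMod 3 :=
  ∑ᶠ t : {t : Finset (Fin N) // IsTriangle C.T t},
    if x ∈ t.val then signVal (C.col t) else 0

/-- The number of triangles coloured `+1` (colour `0`). -/
noncomputable def plusCount {N : ℕ} (C : ColouredTri N 2) : ℕ :=
  Nat.card {t : {t : Finset (Fin N) // IsTriangle C.T t} // C.col t = 0}

/-- Adjacency in the `k`-dimensional hypercube: the two vertices differ in
exactly one coordinate. -/
def cubeAdj (k : ℕ) (u v : Fin k → Bool) : Prop := ∃! i, u i ≠ v i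

/-- The `k`-dimensional hypercube graph on `{0,1}^k`. -/
def cubeGraph (k : ℕ) : SimpleGraph (Fin k → Bool) where
  Adj := cubeAdj k
  symm := by
    constructor
    rintro u v ⟨i, hi, hu⟩
    exact ⟨i, hi.symm, fun j hj => hu j hj.symm⟩
  loopless := by
    constructor
    rintro u ⟨i, hi, -⟩
    exact hi rfl

/-- `f` exhibits a `k`-dimensional hypercube inside the connected component of `C`
in the 2-coloured flip graph. -/
def CubeEmb {N : ℕ} (C : ColouredTri N 2) (k : ℕ)
    (f : (Fin k → Bool) → ColouredTri N 2) : Prop :=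
  Function.Injective f ∧
  (∀ u v, cubeAdj k u v → (flipGraph N).Adj (f u) (f v)) ∧
  ∀ u, (flipGraph N).Reachable C (f u)

/-- `G` contains a subdivision (topological copy) of `H`: there are branch vertices
`f w` for the vertices `w` of `H` and internally disjoint paths in `G` between them
realising the edges of `H`. -/
def ContainsSubdivision {V W : Type*} (G : SimpleGraph V) (H : SimpleGraph W) : Prop :=
  ∃ f : W → V, Function.Injective f ∧
    ∃ P : ∀ u v : W, H.Adj u v → G.Walk (f u) (f v),
      (∀ u v (h : H.Adj u v), (P u v h).IsPath) ∧
      (∀ u v (h : H.Adj u v) (w : W), f w ∈ (P u v h).support → w = u ∨ w = v) ∧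
      (∀ u₁ v₁ (h₁ : H.Adj u₁ v₁) u₂ v₂ (h₂ : H.Adj u₂ v₂),
        (s(u₁, v₁) : Sym2 W) ≠ s(u₂, v₂) →
        ∀ x, x ∈ (P u₁ v₁ h₁).support → x ∈ (P u₂ v₂ h₂).support →
          (x = f u₁ ∨ x = f v₁) ∧ (x = f u₂ ∨ x = f v₂))

/-- Planarity, via Kuratowski's characterisation: a graph is planar iff it contains
no subdivision of `K₅` and no subdivision of `K₃,₃`. -/
def IsPlanar {V : Type*} (G : SimpleGraph V) : Prop :=
  ¬ ContainsSubdivision G (SimpleGraph.completeGraph (Fin 5)) ∧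
  ¬ ContainsSubdivision G (completeBipartiteGraph (Fin 3) (Fin 3))


section Aux

variable {N : ℕ}

lemma pair_eq' {α : Type*} [DecidableEq α] {u v a b : α}
    (h : ({u, v} : Finset α) = {a, b}) : (u = a ∧ v = b) ∨ (u = b ∧ v = a) := by
  have hu : u ∈ ({a, b} : Finset α) := by rw [← h]; simp
  have hv : v ∈ ({a, b} : Finset α) := by rw [← h]; simp
  have hb : b ∈ ({u, v} : Finset α) := by rw [h]; simp
  have ha : a ∈ ({u, v} : Finset α) := by rw [h]; simp
  simp only [Finset.mem_insert, Finset.mem_singleton] at hu hv ha hb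
  tauto

lemma bdry_val {i j : Fin N} (h : BdryAdj N i j) :
    i.val + 1 = j.val ∨ (i.val = N - 1 ∧ j.val = 0) ∨
    j.val + 1 = i.val ∨ (j.val = N - 1 ∧ i.val = 0) := by
  have hi := i.isLt; have hj := j.isLt
  rcases h with h | h
  · rcases Nat.lt_or_ge (i.val + 1) N with hl | hg
    · rw [Nat.mod_eq_of_lt hl] at h; omega
    · have he : i.val + 1 = N := by omega
      rw [he, Nat.mod_self] at h; omega
  · rcases Nat.lt_or_ge (j.val + 1) N with hl | hg
    · rw [Nat.mod_eq_of_lt hl] at h; omega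
    · have he : j.val + 1 = N := by omega
      rw [he, Nat.mod_self] at h; omega

lemma bdry_not_cross_left {i j : Fin N} (h : BdryAdj N i j) (e : Finset (Fin N)) :
    ¬ Crosses {i, j} e := by
  rintro ⟨a, b, c, f, hd, he, h1, h2, h3⟩
  have hab : BdryAdj N a b := by
    rcases pair_eq' hd with ⟨h1', h2'⟩ | ⟨h1', h2'⟩
    · rw [← h1', ← h2']; exact h
    · rw [← h2', ← h1']; exact Or.symm h
  have hv := bdry_val hab
  have h1' : a.val < c.val := h1
  have h2' : c.val < b.val := h2
  have h3' : b.val < f.val := h3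
  have hf := f.isLt
  omega

lemma bdry_not_cross_right {i j : Fin N} (h : BdryAdj N i j) (e : Finset (Fin N)) :
    ¬ Crosses e {i, j} := by
  rintro ⟨a, b, c, f, hd, he, h1, h2, h3⟩
  have hcf : BdryAdj N c f := by
    rcases pair_eq' he with ⟨h1', h2'⟩ | ⟨h1', h2'⟩
    · rw [← h1', ← h2']; exact h
    · rw [← h2', ← h1']; exact Or.symm h
  have hv := bdry_val hcf
  have h1' : a.val < c.val := h1
  have h2' : c.val < b.val := h2
  have h3' : b.val < f.val := h3
  have hf := f.isLt
  omega

lemma crosses_of {a b c f : Fin N} (h1 : a < c) (h2 : c < b) (h3 : b < f) :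
    Crosses ({a, b} : Finset (Fin N)) {c, f} := ⟨a, b, c, f, rfl, rfl, h1, h2, h3⟩

lemma edge_symm {T : Triangulation N} {u v : Fin N} (h : IsEdge T u v) : IsEdge T v u := by
  refine ⟨h.1.symm, ?_⟩
  rcases h.2 with hb | hd
  · exact Or.inl (Or.symm hb)
  · exact Or.inr (by rwa [Finset.pair_comm])

lemma edges_not_cross {T : Triangulation N} {p₁ p₂ p₃ p₄ : Fin N}
    (e1 : IsEdge T p₁ p₂) (e2 : IsEdge T p₃ p₄) :
    ¬ Crosses ({p₁, p₂} : Finset (Fin N)) {p₃, p₄} := by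
  rcases e1.2 with hb | hd1
  · exact bdry_not_cross_left hb _
  rcases e2.2 with hb | hd2
  · exact bdry_not_cross_right hb _
  exact T.noncross _ hd1 _ hd2

lemma outside_of {z u v : Fin N} (hzu : z ≠ u) (hzv : z ≠ v)
    (hzi : ¬ (u < z ∧ z < v)) : z < u ∨ v < z := by
  rcases lt_trichotomy z u with h | h | h
  · exact Or.inl h
  · exact absurd h hzu
  · right
    rcases lt_trichotomy z v with h' | h' | h'
    · exact absurd ⟨h, h'⟩ hzi
    · exact absurd h' hzv
    · exact h'

lemma same_side_false_lt {T : Triangulation N} {u v z w : Fin N} (huv : u < v) (hzw : z < w)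
    (euz : IsEdge T u z) (evz : IsEdge T v z) (euw : IsEdge T u w) (evw : IsEdge T v w)
    (hside : (u < z ∧ z < v) ↔ (u < w ∧ w < v)) : False := by
  have hzu : z ≠ u := euz.1.symm
  have hzv : z ≠ v := evz.1.symm
  have hwu : w ≠ u := euw.1.symm
  have hwv : w ≠ v := evw.1.symm
  by_cases hzi : u < z ∧ z < v
  · have hwi := hside.mp hzi
    exact edges_not_cross euw (edge_symm evz) (crosses_of hzi.1 hzw hwi.2)
  · have hwi : ¬ (u < w ∧ w < v) := fun hh => hzi (hside.mpr hh)
    rcases outside_of hzu hzv hzi with hz' | hz' <;>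
      rcases outside_of hwu hwv hwi with hw' | hw'
    · exact edges_not_cross (edge_symm euz) (edge_symm evw) (crosses_of hzw hw' huv)
    · exact edges_not_cross (edge_symm evz) euw (crosses_of hz' huv hw')
    · exact absurd (lt_trans (lt_trans hw' huv) hz') (lt_asymm hzw)
    · exact edges_not_cross euz evw (crosses_of huv hz' hzw)

lemma same_side_false {T : Triangulation N} {u v z w : Fin N} (huv : u < v) (hzw : z ≠ w)
    (euz : IsEdge T u z) (evz : IsEdge T v z) (euw : IsEdge T u w) (evw : IsEdge T v w)
    (hside : (u < z ∧ z < v) ↔ (u < w ∧ w < v)) : False := by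
  rcases lt_or_gt_of_ne hzw with h | h
  · exact same_side_false_lt huv h euz evz euw evw hside
  · exact same_side_false_lt huv h euw evw euz evz hside.symm

lemma no_three {T : Triangulation N} {u v x₁ x₂ x₃ : Fin N} (huv : u < v)
    (h12 : x₁ ≠ x₂) (h13 : x₁ ≠ x₃) (h23 : x₂ ≠ x₃)
    (e1 : IsEdge T u x₁) (e1' : IsEdge T v x₁)
    (e2 : IsEdge T u x₂) (e2' : IsEdge T v x₂)
    (e3 : IsEdge T u x₃) (e3' : IsEdge T v x₃) : False := by
  by_cases i1 : u < x₁ ∧ x₁ < v <;> by_cases i2 : u < x₂ ∧ x₂ < v <;>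
    by_cases i3 : u < x₃ ∧ x₃ < v <;>
    first
      | exact same_side_false huv h12 e1 e1' e2 e2' (iff_of_true i1 i2)
      | exact same_side_false huv h12 e1 e1' e2 e2' (iff_of_false i1 i2)
      | exact same_side_false huv h13 e1 e1' e3 e3' (iff_of_true i1 i3)
      | exact same_side_false huv h13 e1 e1' e3 e3' (iff_of_false i1 i3)
      | exact same_side_false huv h23 e2 e2' e3 e3' (iff_of_true i2 i3)
      | exact same_side_false huv h23 e2 e2' e3 e3' (iff_of_false i2 i3)

lemma chord_not_edge {T : Triangulation N} {u v p q : Fin N} (huv : u < v)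
    (euv : IsEdge T u v) (hpq : p ≠ q)
    (eup : IsEdge T u p) (evp : IsEdge T v p)
    (euq : IsEdge T u q) (evq : IsEdge T v q)
    (epq : IsEdge T p q) : False := by
  have hpu : p ≠ u := eup.1.symm
  have hpv : p ≠ v := evp.1.symm
  have hqu : q ≠ u := euq.1.symm
  have hqv : q ≠ v := evq.1.symm
  by_cases ip : u < p ∧ p < v <;> by_cases iq : u < q ∧ q < v
  · exact same_side_false huv hpq eup evp euq evq (iff_of_true ip iq)
  · rcases outside_of hqu hqv iq with h | h
    · exact edges_not_cross (edge_symm epq) euv (crosses_of h ip.1 ip.2)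
    · exact edges_not_cross euv epq (crosses_of ip.1 ip.2 h)
  · rcases outside_of hpu hpv ip with h | h
    · exact edges_not_cross epq euv (crosses_of h iq.1 iq.2)
    · exact edges_not_cross euv (edge_symm epq) (crosses_of iq.1 iq.2 h)
  · exact same_side_false huv hpq eup evp euq evq (iff_of_false ip iq)

lemma tri_card {T : Triangulation N} {t : Finset (Fin N)} (h : IsTriangle T t) :
    t.card = 3 := by
  obtain ⟨a, b, c, hab, hac, hbc, rfl, -⟩ := h
  rw [Finset.card_insert_of_notMem (by simp [hab, hac]),
    Finset.card_insert_of_notMem (by simp [hbc]), Finset.card_singleton]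

lemma triple_ne {α : Type*} [DecidableEq α] {x y z : α}
    (h : ({x, y, z} : Finset α).card = 3) : x ≠ y ∧ x ≠ z ∧ y ≠ z := by
  refine ⟨?_, ?_, ?_⟩ <;> rintro rfl
  · have hsub : ({x, x, z} : Finset α) ⊆ {x, z} := by
      intro t ht; simp at ht ⊢; tauto
    have h1 := Finset.card_le_card hsub
    have h2 := Finset.card_insert_le x ({z} : Finset α)
    simp at h2; omega
  · have hsub : ({x, y, x} : Finset α) ⊆ {x, y} := by
      intro t ht; simp at ht ⊢; tauto
    have h1 := Finset.card_le_card hsub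
    have h2 := Finset.card_insert_le x ({y} : Finset α)
    simp at h2; omega
  · have hsub : ({x, y, y} : Finset α) ⊆ {x, y} := by
      intro t ht; simp at ht ⊢; tauto
    have h1 := Finset.card_le_card hsub
    have h2 := Finset.card_insert_le x ({y} : Finset α)
    simp at h2; omega

lemma tri_edge {T : Triangulation N} {t : Finset (Fin N)} (h : IsTriangle T t)
    {u w : Fin N} (hu : u ∈ t) (hw : w ∈ t) (huw : u ≠ w) : IsEdge T u w := by
  obtain ⟨a, b, c, hab, hac, hbc, rfl, e1, e2, e3⟩ := h
  simp only [Finset.mem_insert, Finset.mem_singleton] at hu hw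
  rcases hu with rfl | rfl | rfl <;> rcases hw with rfl | rfl | rfl <;>
    first
      | exact absurd rfl huw
      | assumption
      | exact edge_symm e1
      | exact edge_symm e2
      | exact edge_symm e3

lemma exists_third {t : Finset (Fin N)} {a b : Fin N} (hc : t.card = 3)
    (ha : a ∈ t) (hb : b ∈ t) (hab : a ≠ b) :
    ∃ z, z ≠ a ∧ z ≠ b ∧ t = {a, b, z} := by
  have hb' : b ∈ t.erase a := Finset.mem_erase.mpr ⟨hab.symm, hb⟩
  have h2 : (t.erase a).card = 2 := by
    have := Finset.card_erase_of_mem ha; omega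
  have h1 : ((t.erase a).erase b).card = 1 := by
    have := Finset.card_erase_of_mem hb'; omega
  obtain ⟨z, hz⟩ := Finset.card_eq_one.mp h1
  have hzmem : z ∈ (t.erase a).erase b := by rw [hz]; simp
  rw [Finset.mem_erase, Finset.mem_erase] at hzmem
  refine ⟨z, hzmem.2.1, hzmem.1, ?_⟩
  calc t = insert a (t.erase a) := (Finset.insert_erase ha).symm
    _ = insert a (insert b ((t.erase a).erase b)) := by rw [Finset.insert_erase hb']
    _ = {a, b, z} := by rw [hz]

open Classical in
/-- The triangles of a coloured triangulation, as a finset. -/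
noncomputable def triFin {N : ℕ} (C : ColouredTri N 2) : Finset (Finset (Fin N)) :=
  Finset.univ.filter (fun t => IsTriangle C.T t)

open Classical in
/-- The weight contribution of a single (potential) triangle. -/
noncomputable def twt {N : ℕ} (C : ColouredTri N 2) (x : Fin N) (t : Finset (Fin N)) :
    ZMod 3 :=
  if h : IsTriangle C.T t then (if x ∈ t then signVal (C.col ⟨t, h⟩) else 0) else 0

lemma mem_triFin {C : ColouredTri N 2} {t : Finset (Fin N)} :
    t ∈ triFin C ↔ IsTriangle C.T t := by
  simp [triFin]

lemma twt_pos {C : ColouredTri N 2} {x : Fin N} {t : Finset (Fin N)}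
    (h : IsTriangle C.T t) :
    twt C x t = if x ∈ t then signVal (C.col ⟨t, h⟩) else 0 := by
  simp only [twt]
  rw [dif_pos h]

lemma weight_eq_sum (C : ColouredTri N 2) (x : Fin N) :
    weight C x = ∑ t ∈ triFin C, twt C x t := by
  classical
  haveI : Fintype {t : Finset (Fin N) // IsTriangle C.T t} := Subtype.fintype _
  rw [weight, finsum_eq_sum_of_fintype,
    Finset.sum_subtype (triFin C) (fun t => mem_triFin) (twt C x)]
  refine Finset.sum_congr rfl fun t _ => ?_
  simp [twt, t.prop]

lemma signVal_rot : ∀ c : Fin 2, signVal (finRotate 2 c) = - signVal c := by decide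

end Aux

/-- The weighting of a 2-coloured triangulation is invariant under 2-coloured
flips. -/
theorem weight_invariant_under_flip {N : ℕ} (C C' : ColouredTri N 2)
    (h : Flip2 C C') (x : Fin N) : weight C x = weight C' x := by
  classical
  obtain ⟨d, a, b, p, q, h₁, h₂, h₁', h₂', hdeq, hdmem, hpq, hcoleq, hdiags, hc3, hc4,
    hother⟩ := h
  subst hdeq
  obtain ⟨hab, hap, hbp⟩ := triple_ne (tri_card h₁)
  obtain ⟨-, haq, hbq⟩ := triple_ne (tri_card h₂)
  have eap : IsEdge C.T a p := tri_edge h₁ (by simp) (by simp) hap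
  have ebp : IsEdge C.T b p := tri_edge h₁ (by simp) (by simp) hbp
  have eaq : IsEdge C.T a q := tri_edge h₂ (by simp) (by simp) haq
  have ebq : IsEdge C.T b q := tri_edge h₂ (by simp) (by simp) hbq
  have eab : IsEdge C.T a b := ⟨hab, Or.inr hdmem⟩
  have eap' : IsEdge C'.T a p := tri_edge h₁' (by simp) (by simp) hap
  have eaq' : IsEdge C'.T a q := tri_edge h₁' (by simp) (by simp) haq
  have ebp' : IsEdge C'.T b p := tri_edge h₂' (by simp) (by simp) hbp
  have ebq' : IsEdge C'.T b q := tri_edge h₂' (by simp) (by simp) hbq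
  -- the old diagonal is not an edge of the new triangulation
  have hnbdry : ¬ BdryAdj N a b := by
    obtain ⟨i, j, hij, hnadj, hij_eq⟩ := C.T.isDiag _ hdmem
    rcases pair_eq' hij_eq with ⟨h1', h2'⟩ | ⟨h1', h2'⟩
    · rw [h1', h2']; exact hnadj
    · rw [h1', h2']; exact fun hh => hnadj (Or.symm hh)
  have hne_ab : ¬ IsEdge C'.T a b := by
    rintro ⟨-, hor | hmem⟩
    · exact hnbdry hor
    · rw [hdiags] at hmem
      rcases Finset.mem_insert.mp hmem with heq | hmem'
      · rcases pair_eq' heq with ⟨h1', -⟩ | ⟨h1', -⟩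
        · exact hap h1'
        · exact haq h1'
      · exact Finset.notMem_erase _ _ hmem'
  -- the new diagonal is not an edge of the old triangulation
  have hne_pq : ¬ IsEdge C.T p q := by
    intro epq
    rcases lt_or_gt_of_ne hab with hlt | hlt
    · exact chord_not_edge hlt eab hpq eap ebp eaq ebq epq
    · exact chord_not_edge hlt (edge_symm eab) hpq ebp eap ebq eaq epq
  have notT1' : ¬ IsTriangle C'.T {a, b, p} :=
    fun ht => hne_ab (tri_edge ht (by simp) (by simp) hab)
  have notT2' : ¬ IsTriangle C'.T {a, b, q} :=
    fun ht => hne_ab (tri_edge ht (by simp) (by simp) hab)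
  have notT3 : ¬ IsTriangle C.T {a, p, q} :=
    fun ht => hne_pq (tri_edge ht (by simp) (by simp) hpq)
  have notT4 : ¬ IsTriangle C.T {b, p, q} :=
    fun ht => hne_pq (tri_edge ht (by simp) (by simp) hpq)
  -- transfer of triangles from C to C'
  have transferCC' : ∀ t, IsTriangle C.T t → t ≠ {a, b, p} → t ≠ {a, b, q} →
      IsTriangle C'.T t := by
    intro t ht ht1 ht2
    by_cases habt : a ∈ t ∧ b ∈ t
    · obtain ⟨z, hza, hzb, rfl⟩ := exists_third (tri_card ht) habt.1 habt.2 hab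
      have hzp : z ≠ p := by rintro rfl; exact ht1 rfl
      have hzq : z ≠ q := by rintro rfl; exact ht2 rfl
      have eaz : IsEdge C.T a z := tri_edge ht (by simp) (by simp) (Ne.symm hza)
      have ebz : IsEdge C.T b z := tri_edge ht (by simp) (by simp) (Ne.symm hzb)
      exfalso
      rcases lt_or_gt_of_ne hab with hlt | hlt
      · exact no_three hlt hpq hzp.symm hzq.symm eap ebp eaq ebq eaz ebz
      · exact no_three hlt hpq hzp.symm hzq.symm ebp eap ebq eaq ebz eaz
    · obtain ⟨a', b', c', hd1, hd2, hd3, rfl, e1, e2, e3⟩ := ht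
      have trans : ∀ u w : Fin N, u ∈ ({a', b', c'} : Finset (Fin N)) →
          w ∈ ({a', b', c'} : Finset (Fin N)) → IsEdge C.T u w → IsEdge C'.T u w := by
        intro u w hu hw e
        refine ⟨e.1, ?_⟩
        rcases e.2 with hbd | hdg
        · exact Or.inl hbd
        · refine Or.inr ?_
          rw [hdiags]
          refine Finset.mem_insert_of_mem (Finset.mem_erase.mpr ⟨?_, hdg⟩)
          intro heq
          rcases pair_eq' heq with ⟨h1', h2'⟩ | ⟨h1', h2'⟩
          · exact habt ⟨h1' ▸ hu, h2' ▸ hw⟩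
          · exact habt ⟨h2' ▸ hw, h1' ▸ hu⟩
      exact ⟨a', b', c', hd1, hd2, hd3, rfl,
        trans _ _ (by simp) (by simp) e1,
        trans _ _ (by simp) (by simp) e2,
        trans _ _ (by simp) (by simp) e3⟩
  -- transfer of triangles from C' to C
  have transferC'C : ∀ t, IsTriangle C'.T t → t ≠ {a, p, q} → t ≠ {b, p, q} →
      IsTriangle C.T t := by
    intro t ht ht3 ht4
    by_cases hpqt : p ∈ t ∧ q ∈ t
    · obtain ⟨z, hzp, hzq, rfl⟩ := exists_third (tri_card ht) hpqt.1 hpqt.2 hpq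
      have hza : z ≠ a := by
        rintro rfl
        exact ht3 (by ext w; simp [Finset.mem_insert]; tauto)
      have hzb : z ≠ b := by
        rintro rfl
        exact ht4 (by ext w; simp [Finset.mem_insert]; tauto)
      have epz : IsEdge C'.T p z := tri_edge ht (by simp) (by simp) (Ne.symm hzp)
      have eqz : IsEdge C'.T q z := tri_edge ht (by simp) (by simp) (Ne.symm hzq)
      exfalso
      rcases lt_or_gt_of_ne hpq with hlt | hlt
      · exact no_three hlt hab hza.symm hzb.symm (edge_symm eap') (edge_symm eaq')
          (edge_symm ebp') (edge_symm ebq') epz eqz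
      · exact no_three hlt hab hza.symm hzb.symm (edge_symm eaq') (edge_symm eap')
          (edge_symm ebq') (edge_symm ebp') eqz epz
    · obtain ⟨a', b', c', hd1, hd2, hd3, rfl, e1, e2, e3⟩ := ht
      have trans : ∀ u w : Fin N, u ∈ ({a', b', c'} : Finset (Fin N)) →
          w ∈ ({a', b', c'} : Finset (Fin N)) → IsEdge C'.T u w → IsEdge C.T u w := by
        intro u w hu hw e
        refine ⟨e.1, ?_⟩
        rcases e.2 with hbd | hdg
        · exact Or.inl hbd
        · rw [hdiags] at hdg
          rcases Finset.mem_insert.mp hdg with heq | hmem'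
          · exfalso
            rcases pair_eq' heq with ⟨h1', h2'⟩ | ⟨h1', h2'⟩
            · exact hpqt ⟨h1' ▸ hu, h2' ▸ hw⟩
            · exact hpqt ⟨h2' ▸ hw, h1' ▸ hu⟩
          · exact Or.inr (Finset.mem_of_mem_erase hmem')
      exact ⟨a', b', c', hd1, hd2, hd3, rfl,
        trans _ _ (by simp) (by simp) e1,
        trans _ _ (by simp) (by simp) e2,
        trans _ _ (by simp) (by simp) e3⟩
  -- the four distinguished triangles
  have hT1T2 : ({a, b, p} : Finset (Fin N)) ≠ {a, b, q} := by
    intro heq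
    have hm : p ∈ ({a, b, q} : Finset (Fin N)) := by rw [← heq]; simp
    simp only [Finset.mem_insert, Finset.mem_singleton] at hm
    rcases hm with hh | hh | hh
    · exact hap hh.symm
    · exact hbp hh.symm
    · exact hpq hh
  have hT3T4 : ({a, p, q} : Finset (Fin N)) ≠ {b, p, q} := by
    intro heq
    have hm : a ∈ ({b, p, q} : Finset (Fin N)) := by rw [← heq]; simp
    simp only [Finset.mem_insert, Finset.mem_singleton] at hm
    rcases hm with hh | hh | hh
    · exact hab hh
    · exact hap hh
    · exact haq hh
  have hT1S : ({a, b, p} : Finset (Fin N)) ∈ triFin C := mem_triFin.mpr h₁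
  have hT2S : ({a, b, q} : Finset (Fin N)) ∈ triFin C := mem_triFin.mpr h₂
  set S'' : Finset (Finset (Fin N)) :=
    ((triFin C).erase {a, b, p}).erase {a, b, q} with hS''def
  have hSdecomp : triFin C = insert {a, b, p} (insert {a, b, q} S'') := by
    rw [hS''def, Finset.insert_erase (Finset.mem_erase.mpr ⟨hT1T2.symm, hT2S⟩),
      Finset.insert_erase hT1S]
  have hS'decomp : triFin C' = insert {a, p, q} (insert {b, p, q} S'') := by
    ext t
    simp only [hS''def, Finset.mem_insert, Finset.mem_erase, mem_triFin]
    constructor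
    · intro ht'
      by_cases h3 : t = {a, p, q}
      · exact Or.inl h3
      by_cases h4 : t = {b, p, q}
      · exact Or.inr (Or.inl h4)
      refine Or.inr (Or.inr ⟨?_, ?_, transferC'C t ht' h3 h4⟩)
      · rintro rfl; exact notT2' ht'
      · rintro rfl; exact notT1' ht'
    · rintro (rfl | rfl | ⟨hne2, hne1, ht⟩)
      · exact h₁'
      · exact h₂'
      · exact transferCC' t ht hne1 hne2
  have hT2not : ({a, b, q} : Finset (Fin N)) ∉ S'' := Finset.notMem_erase _ _
  have hT1not : ({a, b, p} : Finset (Fin N)) ∉ insert {a, b, q} S'' := by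
    simp only [Finset.mem_insert]
    rintro (heq | hmem)
    · exact hT1T2 heq
    · exact Finset.notMem_erase _ _ (Finset.mem_of_mem_erase hmem)
  have hT4not : ({b, p, q} : Finset (Fin N)) ∉ S'' := by
    intro hmem
    exact notT4 (mem_triFin.mp (Finset.mem_of_mem_erase (Finset.mem_of_mem_erase hmem)))
  have hT3not : ({a, p, q} : Finset (Fin N)) ∉ insert {b, p, q} S'' := by
    simp only [Finset.mem_insert]
    rintro (heq | hmem)
    · exact hT3T4 heq
    · exact notT3 (mem_triFin.mp (Finset.mem_of_mem_erase (Finset.mem_of_mem_erase hmem)))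
  -- the sums over the common triangles agree
  have hsum : ∑ t ∈ S'', twt C x t = ∑ t ∈ S'', twt C' x t := by
    refine Finset.sum_congr rfl fun t hmem => ?_
    have hne2 : t ≠ {a, b, q} := (Finset.mem_erase.mp hmem).1
    have hmem1 := Finset.mem_of_mem_erase hmem
    have hne1 : t ≠ {a, b, p} := (Finset.mem_erase.mp hmem1).1
    have ht : IsTriangle C.T t := mem_triFin.mp (Finset.mem_of_mem_erase hmem1)
    have ht' : IsTriangle C'.T t := transferCC' t ht hne1 hne2
    rw [twt_pos ht, twt_pos ht', hother t ht ht' hne1 hne2]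
  rw [weight_eq_sum, weight_eq_sum, hSdecomp, hS'decomp,
    Finset.sum_insert hT1not, Finset.sum_insert hT2not,
    Finset.sum_insert hT3not, Finset.sum_insert hT4not, hsum]
  rw [twt_pos h₁, twt_pos h₂, twt_pos h₁', twt_pos h₂']
  rw [show C.col ⟨{a, b, q}, h₂⟩ = C.col ⟨{a, b, p}, h₁⟩ from hcoleq.symm,
    hc3, hc4, signVal_rot]
  set s : ZMod 3 := signVal (C.col ⟨{a, b, p}, h₁⟩) with hsdef
  set Ssum : ZMod 3 := ∑ t ∈ S'', twt C' x t with hSsumdef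
  have h3s : s + s + s = 0 := by
    have h30 : (3 : ZMod 3) = 0 := by decide
    calc s + s + s = 3 * s := by ring
      _ = 0 := by rw [h30, zero_mul]
  simp only [Finset.mem_insert, Finset.mem_singleton]
  by_cases hxa : x = a
  · subst hxa
    rw [if_pos (Or.inl rfl), if_pos (Or.inl rfl), if_pos (Or.inl rfl),
      if_neg (by simp [hab, hap, haq])]
    linear_combination h3s
  by_cases hxb : x = b
  · subst hxb
    rw [if_pos (Or.inr (Or.inl rfl)), if_pos (Or.inr (Or.inl rfl)),
      if_neg (by simp [Ne.symm hab, hbp, hbq]), if_pos (Or.inl rfl)]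
    linear_combination h3s
  by_cases hxp : x = p
  · subst hxp
    rw [if_pos (Or.inr (Or.inr rfl)), if_neg (by simp [Ne.symm hap, Ne.symm hbp, hpq]),
      if_pos (Or.inr (Or.inl rfl)), if_pos (Or.inr (Or.inl rfl))]
    linear_combination h3s
  by_cases hxq : x = q
  · subst hxq
    rw [if_neg (by simp [Ne.symm haq, Ne.symm hbq, Ne.symm hpq]),
      if_pos (Or.inr (Or.inr rfl)), if_pos (Or.inr (Or.inr rfl)),
      if_pos (Or.inr (Or.inr rfl))]
    linear_combination h3s
  · rw [if_neg (by simp [hxa, hxb, hxp]), if_neg (by simp [hxa, hxb, hxq]),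
      if_neg (by simp [hxa, hxp, hxq]), if_neg (by simp [hxb, hxp, hxq])]

end PolyFlip
end

section
/- For n ≥ 8, the 2-coloured flip graph of a convex (n+2)-gon contains a connected component that is not a planar graph. -/
namespace PolyFlip


/- ============ auxiliary ============ -/

theorem pair_inj {α} [DecidableEq α] [LinearOrder α] {a b p q : α} (hab : a < b) (hpq : p < q)
    (h : ({a,b} : Finset α) = {p,q}) : a = p ∧ b = q := by
  have ha : a ∈ ({p,q}:Finset α) := by rw [← h]; simp
  have hb : b ∈ ({p,q}:Finset α) := by rw [← h]; simp
  simp only [Finset.mem_insert, Finset.mem_singleton] at ha hb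
  rcases ha with rfl|rfl <;> rcases hb with rfl|rfl
  · exact absurd hab (lt_irrefl _)
  · exact ⟨rfl, rfl⟩
  · exact absurd (hab.trans hpq) (lt_irrefl _)
  · exact absurd hab (lt_irrefl _)

theorem crosses_char {N : ℕ} {p q r s : Fin N} (hpq : p < q) (hrs : r < s) :
    Crosses ({p,q} : Finset (Fin N)) {r,s} ↔ p < r ∧ r < q ∧ q < s := by
  constructor
  · rintro ⟨a, b, c, f, hd, he, h1, h2, h3⟩
    obtain ⟨rfl, rfl⟩ := pair_inj (h1.trans h2) hpq hd.symm
    obtain ⟨rfl, rfl⟩ := pair_inj (h2.trans h3 |>.trans' h1 |> fun _ => lt_trans h2 h3) hrs he.symm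
    exact ⟨h1, h2, h3⟩
  · rintro ⟨h1, h2, h3⟩
    exact ⟨p, q, r, s, rfl, rfl, h1, h2, h3⟩

section
variable (n : ℕ)

abbrev NV := n + 2

def e (i : ℕ) : Fin (n+2) := ⟨i % (n+2), Nat.mod_lt _ (by omega)⟩

variable {n}

lemma e_val {i : ℕ} (h : i < n + 2) : (e n i).val = i := Nat.mod_eq_of_lt h

lemma e_lt {i j : ℕ} (hij : i < j) (hj : j < n + 2) : e n i < e n j := by
  have h1 := e_val (n := n) (i := i) (by omega : i < n + 2)
  have h2 := e_val hj
  simp only [Fin.lt_def, h1, h2]; omega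

lemma e_ne {i j : ℕ} (hij : i ≠ j) (hi : i < n + 2) (hj : j < n + 2) : e n i ≠ e n j := by
  intro h
  have := congrArg Fin.val h
  rw [e_val hi, e_val hj] at this; omega

variable (n)

def isFl (u : Fin 4 → Bool) (i : ℕ) : Prop := ∃ k : Fin 4, u k = true ∧ i = 2 * k.val + 2

instance (u : Fin 4 → Bool) (i : ℕ) : Decidable (isFl u i) := by
  unfold isFl; infer_instance

variable {n}

lemma isFl_le {u : Fin 4 → Bool} {i : ℕ} (h : isFl u i) : 2 ≤ i ∧ i ≤ 8 ∧ i % 2 = 0 := by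
  obtain ⟨k, _, rfl⟩ := h
  have := k.isLt; omega

variable (n)

def Dfan (u : Fin 4 → Bool) : Finset (Finset (Fin (n+2))) :=
  ((Finset.Icc 2 n).filter (fun i => ¬ isFl u i)).image (fun i => {e n 0, e n i})

def Dnew (u : Fin 4 → Bool) : Finset (Finset (Fin (n+2))) :=
  (Finset.univ.filter (fun k : Fin 4 => u k = true)).image
    (fun k => {e n (2*k.val+1), e n (2*k.val+3)})

def D (u : Fin 4 → Bool) : Finset (Finset (Fin (n+2))) := Dfan n u ∪ Dnew n u

variable {n}

lemma mem_D {u : Fin 4 → Bool} {d : Finset (Fin (n+2))} :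
    d ∈ D n u ↔ (∃ i, 2 ≤ i ∧ i ≤ n ∧ ¬ isFl u i ∧ d = {e n 0, e n i}) ∨
      (∃ k : Fin 4, u k = true ∧ d = {e n (2*k.val+1), e n (2*k.val+3)}) := by
  simp only [D, Dfan, Dnew, Finset.mem_union, Finset.mem_image, Finset.mem_filter,
    Finset.mem_Icc, Finset.mem_univ, true_and]
  constructor
  · rintro (⟨i, ⟨⟨h1, h2⟩, h3⟩, rfl⟩ | ⟨k, h1, rfl⟩)
    · exact Or.inl ⟨i, h1, h2, h3, rfl⟩
    · exact Or.inr ⟨k, h1, rfl⟩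
  · rintro (⟨i, h1, h2, h3, rfl⟩ | ⟨k, h1, rfl⟩)
    · exact Or.inl ⟨i, ⟨⟨h1, h2⟩, h3⟩, rfl⟩
    · exact Or.inr ⟨k, h1, rfl⟩

end

section
variable {n : ℕ}

lemma crosses_e {a b c d : ℕ} (hab : a < b) (hcd : c < d) (hb : b < n+2) (hd : d < n+2) :
    Crosses ({e n a, e n b} : Finset (Fin (n+2))) {e n c, e n d} ↔ (a < c ∧ c < b ∧ b < d) := by
  rw [crosses_char (e_lt hab hb) (e_lt hcd hd)]
  simp only [Fin.lt_def, e_val (show a < n+2 by omega), e_val hb,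
    e_val (show c < n+2 by omega), e_val hd]

lemma isDiag_D (hn : 8 ≤ n) {u : Fin 4 → Bool} : ∀ d ∈ D n u, IsDiag (n+2) d := by
  intro d hd
  rcases mem_D.1 hd with ⟨i, h2, hin, -, rfl⟩ | ⟨k, -, rfl⟩
  · refine ⟨e n 0, e n i, e_ne (by omega) (by omega) (by omega), ?_, rfl⟩
    rintro (h | h) <;>
      rw [e_val (show (0:ℕ) < n+2 by omega), e_val (show i < n+2 by omega)] at h
    · rw [Nat.mod_eq_of_lt (by omega)] at h; omega
    · rw [Nat.mod_eq_of_lt (by omega)] at h; omega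
  · have hk4 := k.isLt
    refine ⟨e n (2*k.val+1), e n (2*k.val+3),
      e_ne (by omega) (by omega) (by omega), ?_, rfl⟩
    rintro (h | h) <;>
      rw [e_val (show 2*k.val+1 < n+2 by omega), e_val (show 2*k.val+3 < n+2 by omega)] at h
    · rw [Nat.mod_eq_of_lt (by omega)] at h; omega
    · rcases Nat.lt_or_ge (2*k.val+4) (n+2) with hlt | hge
      · rw [Nat.mod_eq_of_lt hlt] at h; omega
      · rw [show 2*k.val+3+1 = n+2 by omega, Nat.mod_self] at h; omega

lemma noncross_D (hn : 8 ≤ n) {u : Fin 4 → Bool} :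
    ∀ d ∈ D n u, ∀ f ∈ D n u, ¬ Crosses d f := by
  intro d hd f hf hc
  rcases mem_D.1 hd with ⟨i, h2i, hin, hfl, rfl⟩ | ⟨k, hk, rfl⟩ <;>
    rcases mem_D.1 hf with ⟨j, h2j, hjn, hfl', rfl⟩ | ⟨k', hk', rfl⟩
  · rw [crosses_e (by omega) (by omega) (by omega) (by omega)] at hc; omega
  · have := k'.isLt
    rw [crosses_e (by omega) (by omega) (by omega) (by omega)] at hc
    exact hfl ⟨k', hk', by omega⟩
  · have := k.isLt
    rw [crosses_e (by omega) (by omega) (by omega) (by omega)] at hc; omega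
  · have := k.isLt; have := k'.isLt
    rw [crosses_e (by omega) (by omega) (by omega) (by omega)] at hc; omega

lemma maximal_aux (hn : 8 ≤ n) {u : Fin 4 → Bool} (i j : Fin (n+2)) (hij : i < j)
    (hnadj : ¬ BdryAdj (n+2) i j)
    (h : ∀ f ∈ D n u, ¬Crosses ({i,j} : Finset (Fin (n+2))) f ∧ ¬Crosses f {i,j}) :
    ({i,j} : Finset (Fin (n+2))) ∈ D n u := by
  have hjlt := j.isLt
  have hilt := i.isLt
  rw [Fin.lt_def] at hij
  have hiv : i = e n i.val := Fin.ext (by rw [e_val i.isLt])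
  have hjv : j = e n j.val := Fin.ext (by rw [e_val j.isLt])
  have hgap : j.val ≥ i.val + 2 ∧ ¬(i.val = 0 ∧ j.val = n+1) := by
    unfold BdryAdj at hnadj
    push_neg at hnadj
    obtain ⟨h1, h2⟩ := hnadj
    rw [Nat.mod_eq_of_lt (by omega)] at h1
    rcases Nat.lt_or_ge (j.val+1) (n+2) with hlt | hge
    · rw [Nat.mod_eq_of_lt hlt] at h2; omega
    · rw [show j.val+1 = n+2 by omega, Nat.mod_self] at h2; omega
  obtain ⟨hgap1, hgap2⟩ := hgap
  rw [hiv, hjv]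
  rcases Nat.eq_zero_or_pos i.val with hi0 | hipos
  · -- i = 0
    have hjn : j.val ≤ n := by omega
    by_cases hf : isFl u j.val
    · exfalso
      obtain ⟨k, hk, hk2⟩ := hf
      have hk4 := k.isLt
      have hmem : ({e n (2*k.val+1), e n (2*k.val+3)} : Finset (Fin (n+2))) ∈ D n u :=
        mem_D.2 (Or.inr ⟨k, hk, rfl⟩)
      refine (h _ hmem).1 ?_
      rw [hiv, hjv, hi0, crosses_e (by omega) (by omega) (by omega) (by omega)]
      omega
    · rw [hi0]
      exact mem_D.2 (Or.inl ⟨j.val, by omega, hjn, hf, rfl⟩)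
  · -- i ≥ 1
    by_cases hf : isFl u (i.val+1)
    · obtain ⟨k, hk, hk2⟩ := hf
      have hk4 := k.isLt
      by_cases hj2 : j.val = i.val + 2
      · have h1 : i.val = 2*k.val+1 := by omega
        have h2 : j.val = 2*k.val+3 := by omega
        rw [h1, h2]
        exact mem_D.2 (Or.inr ⟨k, hk, rfl⟩)
      · exfalso
        have ht : ¬ isFl u (i.val+2) := by
          intro hfl; have := isFl_le hfl; omega
        have hmem : ({e n 0, e n (i.val+2)} : Finset (Fin (n+2))) ∈ D n u :=
          mem_D.2 (Or.inl ⟨i.val+2, by omega, by omega, ht, rfl⟩)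
        refine (h _ hmem).2 ?_
        rw [hiv, hjv, crosses_e (by omega) (by omega) (by omega) (by omega)]
        omega
    · exfalso
      have hmem : ({e n 0, e n (i.val+1)} : Finset (Fin (n+2))) ∈ D n u :=
        mem_D.2 (Or.inl ⟨i.val+1, by omega, by omega, hf, rfl⟩)
      refine (h _ hmem).2 ?_
      rw [hiv, hjv, crosses_e (by omega) (by omega) (by omega) (by omega)]
      omega

lemma bdryAdj_comm {N : ℕ} {i j : Fin N} : BdryAdj N i j ↔ BdryAdj N j i := by
  unfold BdryAdj; tauto

def Tu (hn : 8 ≤ n) (u : Fin 4 → Bool) : Triangulation (n+2) where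
  diags := D n u
  isDiag := isDiag_D hn
  noncross := noncross_D hn
  maximal := by
    rintro d ⟨i, j, hne, hnadj, rfl⟩ h
    rcases lt_or_gt_of_ne hne with hij | hij
    · exact maximal_aux hn i j hij hnadj h
    · rw [Finset.pair_comm]
      refine maximal_aux hn j i hij (fun hb => hnadj (bdryAdj_comm.1 hb)) ?_
      intro f hf
      rw [Finset.pair_comm j i]
      exact h f hf

end

section
variable {n : ℕ}

lemma isEdge_symm {N : ℕ} {T : Triangulation N} {a b : Fin N} (h : IsEdge T a b) :
    IsEdge T b a := by
  obtain ⟨h1, h2⟩ := h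
  refine ⟨h1.symm, ?_⟩
  rw [Finset.pair_comm, bdryAdj_comm] at h2
  exact h2

lemma triangle_sorted {N : ℕ} {T : Triangulation N} {t : Finset (Fin N)}
    (h : IsTriangle T t) : ∃ a b c : Fin N, a < b ∧ b < c ∧ t = {a, b, c} ∧
      IsEdge T a b ∧ IsEdge T a c ∧ IsEdge T b c := by
  obtain ⟨a, b, c, hab, hac, hbc, rfl, e1, e2, e3⟩ := h
  rcases lt_trichotomy a b with h1 | h1 | h1
  · rcases lt_trichotomy b c with h2 | h2 | h2
    · exact ⟨a, b, c, h1, h2, rfl, e1, e2, e3⟩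
    · exact absurd h2 (by simp [hbc])
    · rcases lt_trichotomy a c with h3 | h3 | h3
      · exact ⟨a, c, b, h3, h2, by ext w; simp; tauto, e2, e1, isEdge_symm e3⟩
      · exact absurd h3 (by simp [hac])
      · exact ⟨c, a, b, h3, h1, by ext w; simp; tauto, isEdge_symm e2, isEdge_symm e3, e1⟩
  · exact absurd h1 (by simp [hab])
  · rcases lt_trichotomy a c with h2 | h2 | h2
    · exact ⟨b, a, c, h1, h2, by ext w; simp; tauto, isEdge_symm e1, e3, e2⟩
    · exact absurd h2 (by simp [hac])
    · rcases lt_trichotomy b c with h3 | h3 | h3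
      · exact ⟨b, c, a, h3, h2, by ext w; simp; tauto, e3, isEdge_symm e1, isEdge_symm e2⟩
      · exact absurd h3 (by simp [hbc])
      · exact ⟨c, b, a, h3, h1, by ext w; simp; tauto, isEdge_symm e3, isEdge_symm e2,
          isEdge_symm e1⟩

lemma edge_cases (hn : 8 ≤ n) {u : Fin 4 → Bool} {x y : Fin (n+2)} (hxy : x < y)
    (he : IsEdge (Tu hn u) x y) :
    (y.val = x.val + 1) ∨ (x.val = 0 ∧ y.val = n+1) ∨
    (x.val = 0 ∧ 2 ≤ y.val ∧ y.val ≤ n ∧ ¬ isFl u y.val) ∨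
    (∃ k : Fin 4, u k = true ∧ x.val = 2*k.val+1 ∧ y.val = 2*k.val+3) := by
  have hylt := y.isLt
  rw [Fin.lt_def] at hxy
  rcases he.2 with (hb | hb) | hd
  · rw [Nat.mod_eq_of_lt (by omega)] at hb
    exact Or.inl hb.symm
  · rcases Nat.lt_or_ge (y.val+1) (n+2) with hlt | hge
    · rw [Nat.mod_eq_of_lt hlt] at hb; omega
    · rw [show y.val+1 = n+2 by omega, Nat.mod_self] at hb
      exact Or.inr (Or.inl ⟨hb.symm, by omega⟩)
  · rcases mem_D.1 hd with ⟨i, h2, hin, hfl, heq⟩ | ⟨k, hk, heq⟩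
    · obtain ⟨hx0, hyi⟩ := pair_inj (Fin.lt_def.2 hxy) (e_lt (by omega) (by omega)) heq
      have hxv : x.val = 0 := by rw [hx0]; exact e_val (by omega)
      have hyv : y.val = i := by rw [hyi]; exact e_val (by omega)
      exact Or.inr (Or.inr (Or.inl ⟨hxv, by omega, by omega, by rw [hyv]; exact hfl⟩))
    · have hk4 := k.isLt
      obtain ⟨hx1, hy1⟩ := pair_inj (Fin.lt_def.2 hxy) (e_lt (by omega) (by omega)) heq
      have hxv : x.val = 2*k.val+1 := by rw [hx1]; exact e_val (by omega)
      have hyv : y.val = 2*k.val+3 := by rw [hy1]; exact e_val (by omega)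
      exact Or.inr (Or.inr (Or.inr ⟨k, hk, hxv, hyv⟩))

def TriP (n : ℕ) (u : Fin 4 → Bool) (t : Finset (Fin (n+2))) : Prop :=
  (∃ i, 1 ≤ i ∧ i ≤ n ∧ ¬ isFl u i ∧ ¬ isFl u (i+1) ∧ t = {e n 0, e n i, e n (i+1)}) ∨
  (∃ k : Fin 4, u k = true ∧
    (t = {e n 0, e n (2*k.val+1), e n (2*k.val+3)} ∨
     t = {e n (2*k.val+1), e n (2*k.val+2), e n (2*k.val+3)}))

lemma not_isFl_odd {u : Fin 4 → Bool} {i : ℕ} (h : i % 2 = 1) : ¬ isFl u i := by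
  intro hf; have := isFl_le hf; omega

lemma isFl_center {u : Fin 4 → Bool} (k : Fin 4) : isFl u (2*k.val+2) ↔ u k = true := by
  constructor
  · rintro ⟨k', hk', hk2⟩
    have : k = k' := Fin.ext (by omega)
    rw [this]; exact hk'
  · intro h; exact ⟨k, h, rfl⟩

end

section
variable {n : ℕ}

lemma e_eq_of_val {x : Fin (n+2)} {i : ℕ} (h : x.val = i) : e n i = x := by
  refine Fin.ext ?_
  rw [e_val (h ▸ x.isLt)]
  omega

lemma triP_of_isTriangle (hn : 8 ≤ n) {u : Fin 4 → Bool} {t : Finset (Fin (n+2))}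
    (h : IsTriangle (Tu hn u) t) : TriP n u t := by
  obtain ⟨a, b, c, hab, hbc, rfl, eab, eac, ebc⟩ := triangle_sorted h
  have hav := a.isLt; have hbv := b.isLt; have hcv := c.isLt
  have habv : a.val < b.val := hab
  have hbcv : b.val < c.val := hbc
  have hac : a < c := hab.trans hbc
  rcases edge_cases hn hac eac with h1 | ⟨ha0, hc1⟩ | ⟨ha0, hc2, hcn, hcf⟩ |
    ⟨k, hk, hak, hck⟩
  · exact absurd h1 (by omega)
  · -- a = 0, c = n+1 (wrap)
    rcases edge_cases hn hbc ebc with g1 | ⟨hb0, -⟩ | ⟨hb0, -, -, -⟩ | ⟨k, hk, hbk, hck'⟩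
    · -- c = b+1, so b = n
      rcases edge_cases hn hab eab with f1 | ⟨-, hbn1⟩ | ⟨-, h2b, hbn, hbf⟩ | ⟨k, hk, hak, -⟩
      · exact absurd hn (by omega)
      · omega
      · refine Or.inl ⟨b.val, by omega, by omega, hbf, ?_, ?_⟩
        · intro hfl; have := isFl_le hfl; omega
        · rw [e_eq_of_val ha0, e_eq_of_val (rfl : b.val = b.val),
            e_eq_of_val (show c.val = b.val + 1 by omega)]
      · omega
    · omega
    · omega
    · exact Or.inr ⟨k, hk, Or.inl (by
        rw [e_eq_of_val ha0, e_eq_of_val hbk, e_eq_of_val hck'])⟩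
  · -- a = 0, fan edge to c
    rcases edge_cases hn hbc ebc with g1 | ⟨hb0, -⟩ | ⟨hb0, -, -, -⟩ | ⟨k, hk, hbk, hck'⟩
    · -- c = b + 1
      rcases edge_cases hn hab eab with f1 | ⟨-, hbn1⟩ | ⟨-, h2b, hbn, hbf⟩ | ⟨k, hk, hak, -⟩
      · -- b = 1
        refine Or.inl ⟨b.val, by omega, by omega, ?_, ?_, ?_⟩
        · intro hfl; have := isFl_le hfl; omega
        · rw [show b.val + 1 = c.val by omega]; exact hcf
        · rw [e_eq_of_val ha0, e_eq_of_val (rfl : b.val = b.val),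
            e_eq_of_val (show c.val = b.val + 1 by omega)]
      · omega
      · refine Or.inl ⟨b.val, by omega, by omega, hbf, ?_, ?_⟩
        · rw [show b.val + 1 = c.val by omega]; exact hcf
        · rw [e_eq_of_val ha0, e_eq_of_val (rfl : b.val = b.val),
            e_eq_of_val (show c.val = b.val + 1 by omega)]
      · omega
    · omega
    · omega
    · exact Or.inr ⟨k, hk, Or.inl (by
        rw [e_eq_of_val ha0, e_eq_of_val hbk, e_eq_of_val hck'])⟩
  · -- ac is a flipped short diagonal, b = 2k+2
    have hk4 := k.isLt
    refine Or.inr ⟨k, hk, Or.inr ?_⟩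
    rw [e_eq_of_val hak, e_eq_of_val (show b.val = 2*k.val+2 by omega), e_eq_of_val hck]

lemma isTriangle_of_triP (hn : 8 ≤ n) {u : Fin 4 → Bool} {t : Finset (Fin (n+2))}
    (h : TriP n u t) : IsTriangle (Tu hn u) t := by
  rcases h with ⟨i, h1, hin, hf1, hf2, rfl⟩ | ⟨k, hk, rfl | rfl⟩
  · refine ⟨e n 0, e n i, e n (i+1), e_ne (by omega) (by omega) (by omega),
      e_ne (by omega) (by omega) (by omega), e_ne (by omega) (by omega) (by omega),
      rfl, ?_, ?_, ?_⟩
    · refine ⟨e_ne (by omega) (by omega) (by omega), ?_⟩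
      rcases Nat.lt_or_ge i 2 with h2 | h2
      · refine Or.inl (Or.inl ?_)
        rw [e_val (show (0:ℕ) < n+2 by omega), e_val (show i < n+2 by omega),
          Nat.mod_eq_of_lt (show 0+1 < n+2 by omega)]
        omega
      · exact Or.inr (mem_D.2 (Or.inl ⟨i, h2, hin, hf1, rfl⟩))
    · refine ⟨e_ne (by omega) (by omega) (by omega), ?_⟩
      rcases Nat.lt_or_ge (i+1) (n+1) with h2 | h2
      · exact Or.inr (mem_D.2 (Or.inl ⟨i+1, by omega, by omega, hf2, rfl⟩))
      · refine Or.inl (Or.inr ?_)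
        rw [e_val (show (0:ℕ) < n+2 by omega), e_val (show i+1 < n+2 by omega),
          show i+1+1 = n+2 by omega, Nat.mod_self]
    · refine ⟨e_ne (by omega) (by omega) (by omega), Or.inl (Or.inl ?_)⟩
      rw [e_val (show i < n+2 by omega), e_val (show i+1 < n+2 by omega),
        Nat.mod_eq_of_lt (show i+1 < n+2 by omega)]
  · have hk4 := k.isLt
    refine ⟨e n 0, e n (2*k.val+1), e n (2*k.val+3),
      e_ne (by omega) (by omega) (by omega), e_ne (by omega) (by omega) (by omega),
      e_ne (by omega) (by omega) (by omega), rfl, ?_, ?_, ?_⟩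
    · refine ⟨e_ne (by omega) (by omega) (by omega), ?_⟩
      rcases Nat.lt_or_ge k.val 1 with h0 | h0
      · refine Or.inl (Or.inl ?_)
        rw [e_val (show (0:ℕ) < n+2 by omega), e_val (show 2*k.val+1 < n+2 by omega),
          Nat.mod_eq_of_lt (show 0+1 < n+2 by omega)]
        omega
      · exact Or.inr (mem_D.2 (Or.inl ⟨2*k.val+1, by omega, by omega,
          not_isFl_odd (by omega), rfl⟩))
    · refine ⟨e_ne (by omega) (by omega) (by omega), ?_⟩
      rcases Nat.lt_or_ge (2*k.val+3) (n+1) with h2 | h2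
      · exact Or.inr (mem_D.2 (Or.inl ⟨2*k.val+3, by omega, by omega,
          not_isFl_odd (by omega), rfl⟩))
      · refine Or.inl (Or.inr ?_)
        rw [e_val (show (0:ℕ) < n+2 by omega), e_val (show 2*k.val+3 < n+2 by omega),
          show 2*k.val+3+1 = n+2 by omega, Nat.mod_self]
    · exact ⟨e_ne (by omega) (by omega) (by omega),
        Or.inr (mem_D.2 (Or.inr ⟨k, hk, rfl⟩))⟩
  · have hk4 := k.isLt
    refine ⟨e n (2*k.val+1), e n (2*k.val+2), e n (2*k.val+3),
      e_ne (by omega) (by omega) (by omega), e_ne (by omega) (by omega) (by omega),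
      e_ne (by omega) (by omega) (by omega), rfl, ?_, ?_, ?_⟩
    · refine ⟨e_ne (by omega) (by omega) (by omega), Or.inl (Or.inl ?_)⟩
      rw [e_val (show 2*k.val+1 < n+2 by omega), e_val (show 2*k.val+2 < n+2 by omega),
        Nat.mod_eq_of_lt (show 2*k.val+1+1 < n+2 by omega)]
    · exact ⟨e_ne (by omega) (by omega) (by omega),
        Or.inr (mem_D.2 (Or.inr ⟨k, hk, rfl⟩))⟩
    · refine ⟨e_ne (by omega) (by omega) (by omega), Or.inl (Or.inl ?_)⟩
      rw [e_val (show 2*k.val+2 < n+2 by omega), e_val (show 2*k.val+3 < n+2 by omega),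
        Nat.mod_eq_of_lt (show 2*k.val+2+1 < n+2 by omega)]

lemma isTriangle_iff (hn : 8 ≤ n) {u : Fin 4 → Bool} {t : Finset (Fin (n+2))} :
    IsTriangle (Tu hn u) t ↔ TriP n u t :=
  ⟨triP_of_isTriangle hn, isTriangle_of_triP hn⟩

end


section
variable {n : ℕ}

def quad (n : ℕ) (k : Fin 4) : Finset (Fin (n+2)) :=
  {e n 0, e n (2*k.val+1), e n (2*k.val+2), e n (2*k.val+3)}

def colF (n : ℕ) (u : Fin 4 → Bool) (t : Finset (Fin (n+2))) : Fin 2 :=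
  if ∃ k : Fin 4, u k = true ∧ t ⊆ quad n k then 1 else 0

instance (u : Fin 4 → Bool) (t : Finset (Fin (n+2))) :
    Decidable (∃ k : Fin 4, u k = true ∧ t ⊆ quad n k) := by infer_instance

def Cfg (hn : 8 ≤ n) (u : Fin 4 → Bool) : ColouredTri (n+2) 2 :=
  ⟨Tu hn u, fun t => colF n u t.val⟩

lemma e_mem_quad {i : ℕ} (hn : 8 ≤ n) (hi : i < n+2) (k : Fin 4) :
    e n i ∈ quad n k ↔ (i = 0 ∨ i = 2*k.val+1 ∨ i = 2*k.val+2 ∨ i = 2*k.val+3) := by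
  have hk4 := k.isLt
  simp only [quad, Finset.mem_insert, Finset.mem_singleton]
  constructor
  · rintro (h|h|h|h) <;> (
      have h' := congrArg Fin.val h
      rw [e_val hi] at h')
    · rw [e_val (show (0:ℕ) < n+2 by omega)] at h'; omega
    · rw [e_val (show 2*k.val+1 < n+2 by omega)] at h'; omega
    · rw [e_val (show 2*k.val+2 < n+2 by omega)] at h'; omega
    · rw [e_val (show 2*k.val+3 < n+2 by omega)] at h'; omega
  · rintro (rfl|rfl|rfl|rfl) <;> simp

lemma colF_fam1 (hn : 8 ≤ n) {u : Fin 4 → Bool} {i : ℕ} (h1 : 1 ≤ i) (hin : i ≤ n)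
    (hf1 : ¬ isFl u i) (hf2 : ¬ isFl u (i+1)) :
    colF n u ({e n 0, e n i, e n (i+1)} : Finset (Fin (n+2))) = 0 := by
  rw [colF, if_neg]
  rintro ⟨k, hk, hsub⟩
  have hk4 := k.isLt
  have hmi : e n i ∈ quad n k := hsub (by simp)
  have hmi1 : e n (i+1) ∈ quad n k := hsub (by simp)
  rw [e_mem_quad hn (by omega) k] at hmi
  rw [e_mem_quad hn (by omega) k] at hmi1
  rcases hmi with h|h|h|h
  · omega
  · exact hf2 ⟨k, hk, by omega⟩
  · exact hf1 ⟨k, hk, by omega⟩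
  · omega

lemma subset_quad_left (k : Fin 4) :
    ({e n 0, e n (2*k.val+1), e n (2*k.val+3)} : Finset (Fin (n+2))) ⊆ quad n k := by
  intro x hx
  simp only [Finset.mem_insert, Finset.mem_singleton] at hx
  simp only [quad, Finset.mem_insert, Finset.mem_singleton]
  tauto

lemma subset_quad_right (k : Fin 4) :
    ({e n (2*k.val+1), e n (2*k.val+2), e n (2*k.val+3)} : Finset (Fin (n+2))) ⊆ quad n k := by
  intro x hx
  simp only [Finset.mem_insert, Finset.mem_singleton] at hx
  simp only [quad, Finset.mem_insert, Finset.mem_singleton]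
  tauto

lemma colF_fam2l {u : Fin 4 → Bool} {k : Fin 4} (hk : u k = true) :
    colF n u ({e n 0, e n (2*k.val+1), e n (2*k.val+3)} : Finset (Fin (n+2))) = 1 := by
  rw [colF, if_pos ⟨k, hk, subset_quad_left k⟩]

lemma colF_fam2r {u : Fin 4 → Bool} {k : Fin 4} (hk : u k = true) :
    colF n u ({e n (2*k.val+1), e n (2*k.val+2), e n (2*k.val+3)} : Finset (Fin (n+2))) = 1 := by
  rw [colF, if_pos ⟨k, hk, subset_quad_right k⟩]

lemma triP_subset_quad (hn : 8 ≤ n) {u : Fin 4 → Bool} {t : Finset (Fin (n+2))} {k : Fin 4}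
    (ht : TriP n u t) (hsub : t ⊆ quad n k) (hk : u k = false) :
    t = {e n 0, e n (2*k.val+1), e n (2*k.val+2)} ∨
    t = {e n 0, e n (2*k.val+2), e n (2*k.val+3)} := by
  have hk4 := k.isLt
  rcases ht with ⟨i, h1, hin, hf1, hf2, rfl⟩ | ⟨k', hk', h⟩
  · have hmi : e n i ∈ quad n k := hsub (by simp)
    have hmi1 : e n (i+1) ∈ quad n k := hsub (by simp)
    rw [e_mem_quad hn (by omega) k] at hmi
    rw [e_mem_quad hn (by omega) k] at hmi1
    rcases hmi with h|h|h|h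
    · omega
    · refine Or.inl ?_
      rw [show i = 2*k.val+1 from h, show 2*k.val+1+1 = 2*k.val+2 by omega]
    · refine Or.inr ?_
      rw [show i = 2*k.val+2 from h, show 2*k.val+2+1 = 2*k.val+3 by omega]
    · omega
  · exfalso
    have hk4' := k'.isLt
    have hne : k' ≠ k := by rintro rfl; rw [hk'] at hk; exact absurd hk (by simp)
    have hm1 : e n (2*k'.val+1) ∈ quad n k := by
      rcases h with rfl | rfl <;> exact hsub (by simp)
    have hm3 : e n (2*k'.val+3) ∈ quad n k := by
      rcases h with rfl | rfl <;> exact hsub (by simp)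
    rw [e_mem_quad hn (by omega) k] at hm1
    rw [e_mem_quad hn (by omega) k] at hm3
    have : k'.val = k.val := by omega
    exact hne (Fin.ext this)

lemma colF_update (hn : 8 ≤ n) {u : Fin 4 → Bool} {k : Fin 4} {t : Finset (Fin (n+2))}
    (hns : ¬ t ⊆ quad n k) :
    colF n (Function.update u k true) t = colF n u t := by
  unfold colF
  refine if_congr ?_ rfl rfl
  constructor
  · rintro ⟨j, hj, hs⟩
    rcases eq_or_ne j k with rfl | hjk
    · exact absurd hs hns
    · rw [Function.update_apply, if_neg hjk] at hj
      exact ⟨j, hj, hs⟩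
  · rintro ⟨j, hj, hs⟩
    rcases eq_or_ne j k with rfl | hjk
    · exact absurd hs hns
    · exact ⟨j, by rw [Function.update_apply, if_neg hjk]; exact hj, hs⟩

lemma isFl_update {u : Fin 4 → Bool} {k : Fin 4} {i : ℕ} :
    isFl (Function.update u k true) i ↔ isFl u i ∨ i = 2*k.val+2 := by
  constructor
  · rintro ⟨j, hj, rfl⟩
    rcases eq_or_ne j k with rfl | hjk
    · exact Or.inr rfl
    · rw [Function.update_apply, if_neg hjk] at hj
      exact Or.inl ⟨j, hj, rfl⟩
  · rintro (⟨j, hj, rfl⟩ | rfl)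
    · rcases eq_or_ne j k with rfl | hjk
      · exact ⟨j, by simp, rfl⟩
      · exact ⟨j, by rw [Function.update_apply, if_neg hjk]; exact hj, rfl⟩
    · exact ⟨k, by simp, rfl⟩

lemma pair_fan_inj {i i' : ℕ} (h1 : 1 ≤ i) (hi : i < n+2) (h1' : 1 ≤ i') (hi' : i' < n+2)
    (h : ({e n 0, e n i} : Finset (Fin (n+2))) = {e n 0, e n i'}) : i = i' := by
  obtain ⟨-, h2⟩ := pair_inj (e_lt h1 hi) (e_lt h1' hi') h
  have := congrArg Fin.val h2
  rw [e_val hi, e_val hi'] at this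
  exact this

lemma pair_fan_ne_new (hn : 8 ≤ n) {i : ℕ} (h1 : 1 ≤ i) (hi : i < n+2) (j : Fin 4) :
    ({e n 0, e n i} : Finset (Fin (n+2))) ≠ {e n (2*j.val+1), e n (2*j.val+3)} := by
  have hj4 := j.isLt
  intro h
  obtain ⟨h2, -⟩ := pair_inj (e_lt h1 hi) (e_lt (by omega) (by omega)) h
  have := congrArg Fin.val h2
  rw [e_val (show (0:ℕ) < n+2 by omega), e_val (show 2*j.val+1 < n+2 by omega)] at this
  omega

lemma pair_new_inj (hn : 8 ≤ n) {j j' : Fin 4}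
    (h : ({e n (2*j.val+1), e n (2*j.val+3)} : Finset (Fin (n+2)))
      = {e n (2*j'.val+1), e n (2*j'.val+3)}) : j = j' := by
  have hj4 := j.isLt; have hj4' := j'.isLt
  obtain ⟨h2, -⟩ := pair_inj (e_lt (by omega) (by omega)) (e_lt (by omega) (by omega)) h
  have := congrArg Fin.val h2
  rw [e_val (show 2*j.val+1 < n+2 by omega), e_val (show 2*j'.val+1 < n+2 by omega)] at this
  exact Fin.ext (by omega)

end

section
variable {n : ℕ}

lemma tri_perm_132 {α} [DecidableEq α] (x y z : α) : ({x,y,z} : Finset α) = {x,z,y} := by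
  ext w; simp; tauto

lemma tri_perm_213 {α} [DecidableEq α] (x y z : α) : ({x,y,z} : Finset α) = {y,x,z} := by
  ext w; simp; tauto

lemma D_update (hn : 8 ≤ n) {u : Fin 4 → Bool} {k : Fin 4} (hk : u k = false) :
    D n (Function.update u k true) =
      insert {e n (2*k.val+1), e n (2*k.val+3)} ((D n u).erase {e n 0, e n (2*k.val+2)}) := by
  have hk4 := k.isLt
  ext d'
  rw [Finset.mem_insert, Finset.mem_erase, mem_D, mem_D]
  constructor
  · rintro (⟨i, h2, hin, hfl, rfl⟩ | ⟨k', hk', rfl⟩)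
    · rw [isFl_update] at hfl
      push_neg at hfl
      refine Or.inr ⟨?_, Or.inl ⟨i, h2, hin, hfl.1, rfl⟩⟩
      intro h
      exact hfl.2 (pair_fan_inj (by omega) (by omega) (by omega) (by omega) h)
    · rcases eq_or_ne k' k with rfl | hne
      · exact Or.inl rfl
      · have hk'' : u k' = true := by rwa [Function.update_apply, if_neg hne] at hk'
        refine Or.inr ⟨?_, Or.inr ⟨k', hk'', rfl⟩⟩
        intro h
        exact pair_fan_ne_new hn (by omega) (by omega) k' h.symm
  · rintro (rfl | ⟨hne, ⟨i, h2, hin, hfl, rfl⟩ | ⟨k', hk', rfl⟩⟩)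
    · exact Or.inr ⟨k, by simp, rfl⟩
    · refine Or.inl ⟨i, h2, hin, ?_, rfl⟩
      rw [isFl_update]
      rintro (h | h)
      · exact hfl h
      · exact hne (by rw [h])
    · refine Or.inr ⟨k', ?_, rfl⟩
      rcases eq_or_ne k' k with rfl | hne'
      · simp
      · rw [Function.update_apply, if_neg hne']; exact hk'

lemma flip_step (hn : 8 ≤ n) {u : Fin 4 → Bool} {k : Fin 4} (hk : u k = false) :
    Flip2At ({e n 0, e n (2*k.val+2)} : Finset (Fin (n+2)))
      (Cfg hn u) (Cfg hn (Function.update u k true)) := by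
  have hk4 := k.isLt
  set v := Function.update u k true with hv
  have hvk : v k = true := by simp [hv]
  have hfl1 : ¬ isFl u (2*k.val+1) := not_isFl_odd (by omega)
  have hfl2 : ¬ isFl u (2*k.val+2) := by rw [isFl_center]; simp [hk]
  have hfl3 : ¬ isFl u (2*k.val+3) := not_isFl_odd (by omega)
  have e1 : ({e n 0, e n (2*k.val+2), e n (2*k.val+1)} : Finset (Fin (n+2)))
      = {e n 0, e n (2*k.val+1), e n (2*k.val+2)} := tri_perm_132 _ _ _
  have h₁ : IsTriangle (Tu hn u) {e n 0, e n (2*k.val+2), e n (2*k.val+1)} := by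
    rw [e1]
    exact isTriangle_of_triP hn (Or.inl ⟨2*k.val+1, by omega, by omega, hfl1, hfl2, rfl⟩)
  have h₂ : IsTriangle (Tu hn u) {e n 0, e n (2*k.val+2), e n (2*k.val+3)} :=
    isTriangle_of_triP hn (Or.inl ⟨2*k.val+2, by omega, by omega, hfl2, hfl3, rfl⟩)
  have h₁' : IsTriangle (Tu hn v) {e n 0, e n (2*k.val+1), e n (2*k.val+3)} :=
    isTriangle_of_triP hn (Or.inr ⟨k, hvk, Or.inl rfl⟩)
  have h₂' : IsTriangle (Tu hn v) {e n (2*k.val+2), e n (2*k.val+1), e n (2*k.val+3)} := by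
    rw [tri_perm_213]
    exact isTriangle_of_triP hn (Or.inr ⟨k, hvk, Or.inr rfl⟩)
  have c1 : colF n u ({e n 0, e n (2*k.val+2), e n (2*k.val+1)} : Finset (Fin (n+2))) = 0 := by
    rw [e1]; exact colF_fam1 hn (by omega) (by omega) hfl1 hfl2
  have c2 : colF n u ({e n 0, e n (2*k.val+2), e n (2*k.val+3)} : Finset (Fin (n+2))) = 0 :=
    colF_fam1 hn (by omega) (by omega) hfl2 hfl3
  refine ⟨e n 0, e n (2*k.val+2), e n (2*k.val+1), e n (2*k.val+3), h₁, h₂, h₁', h₂',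
    rfl, ?_, ?_, ?_, ?_, ?_, ?_, ?_⟩
  · exact mem_D.2 (Or.inl ⟨2*k.val+2, by omega, by omega, hfl2, rfl⟩)
  · exact e_ne (by omega) (by omega) (by omega)
  · show colF n u _ = colF n u _
    rw [c1, c2]
  · exact D_update hn hk
  · show colF n v _ = finRotate 2 (colF n u _)
    rw [colF_fam2l hvk, c1]
    decide
  · have hc : colF n v ({e n (2*k.val+2), e n (2*k.val+1), e n (2*k.val+3)} :
        Finset (Fin (n+2))) = 1 := by
      rw [tri_perm_213 (e n (2*k.val+2)) (e n (2*k.val+1)) (e n (2*k.val+3))]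
      exact colF_fam2r hvk
    show colF n v _ = finRotate 2 (colF n u _)
    rw [hc, c1]
    decide
  · intro t ht ht' hne1 hne2
    show colF n v t = colF n u t
    have hTu : TriP n u t := triP_of_isTriangle hn ht
    by_cases hsub : t ⊆ quad n k
    · exfalso
      rcases triP_subset_quad hn hTu hsub hk with h | h
      · exact hne1 (by rw [h]; exact e1.symm)
      · exact hne2 h
    · rw [hv]
      exact colF_update hn hsub

lemma new_mem_D (hn : 8 ≤ n) {u : Fin 4 → Bool} (k : Fin 4) :
    ({e n (2*k.val+1), e n (2*k.val+3)} : Finset (Fin (n+2))) ∈ D n u ↔ u k = true := by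
  have hk4 := k.isLt
  rw [mem_D]
  constructor
  · rintro (⟨i, h2, hin, hfl, heq⟩ | ⟨k', hk', heq⟩)
    · exact absurd heq.symm (pair_fan_ne_new hn (by omega) (by omega) k)
    · rw [pair_new_inj hn heq]; exact hk'
  · intro h; exact Or.inr ⟨k, h, rfl⟩

lemma cfg_injective (hn : 8 ≤ n) : Function.Injective (Cfg (n := n) hn) := by
  intro u v h
  funext k
  have hd : D n u = D n v := congrArg (fun C => C.T.diags) h
  have hiff : (({e n (2*k.val+1), e n (2*k.val+3)} : Finset (Fin (n+2))) ∈ D n u) ↔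
      (({e n (2*k.val+1), e n (2*k.val+3)} : Finset (Fin (n+2))) ∈ D n v) := by rw [hd]
  rw [new_mem_D hn, new_mem_D hn] at hiff
  cases hu : u k <;> cases hv : v k
  · rfl
  · rw [hu, hv] at hiff; simp at hiff
  · rw [hu, hv] at hiff; simp at hiff
  · rfl

lemma adj_step (hn : 8 ≤ n) {u : Fin 4 → Bool} {k : Fin 4} (hk : u k = false) :
    (flipGraph (n+2)).Adj (Cfg hn u) (Cfg hn (Function.update u k true)) := by
  have hne : Cfg hn u ≠ Cfg hn (Function.update u k true) := by
    intro h
    have hkk := congrFun (cfg_injective hn h) k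
    simp [hk] at hkk
  exact ⟨hne, Or.inl ⟨{e n 0, e n (2*k.val+2)}, flip_step hn hk⟩⟩



section
variable {n : ℕ}

lemma adj_of_cubeAdj (hn : 8 ≤ n) {u v : Fin 4 → Bool} (h : cubeAdj 4 u v) :
    (flipGraph (n+2)).Adj (Cfg hn u) (Cfg hn v) := by
  obtain ⟨k, hk, huniq⟩ := h
  have heq : ∀ j, j ≠ k → u j = v j := by
    intro j hj
    by_contra hne
    exact hj (huniq j hne)
  cases hu : u k <;> cases hv : v k
  · rw [hu, hv] at hk; exact absurd rfl hk
  · have hveq : v = Function.update u k true := by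
      funext j
      rcases eq_or_ne j k with rfl | hj
      · rw [Function.update_self, hv]
      · rw [Function.update_apply, if_neg hj, heq j hj]
    rw [hveq]
    exact adj_step hn hu
  · have hueq : u = Function.update v k true := by
      funext j
      rcases eq_or_ne j k with rfl | hj
      · rw [Function.update_self, hu]
      · rw [Function.update_apply, if_neg hj, ← heq j hj]
    have h' := adj_step hn (u := v) (k := k) hv
    rw [← hueq] at h'
    exact h'.symm
  · rw [hu, hv] at hk; exact absurd rfl hk

lemma cfg_reachable (hn : 8 ≤ n) (u : Fin 4 → Bool) :
    (flipGraph (n+2)).Reachable (Cfg hn (fun _ => false)) (Cfg hn u) := by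
  suffices H : ∀ m (u : Fin 4 → Bool),
      (Finset.univ.filter (fun k => u k = true)).card = m →
      (flipGraph (n+2)).Reachable (Cfg hn (fun _ => false)) (Cfg hn u) from H _ u rfl
  intro m
  induction m with
  | zero =>
    intro u hu
    have hemp := Finset.card_eq_zero.1 hu
    have : u = fun _ => false := by
      funext j
      cases h : u j
      · rfl
      · exfalso
        have hj : j ∈ Finset.univ.filter (fun k => u k = true) := by simp [h]
        rw [hemp] at hj
        simp at hj
    rw [this]
  | succ m ih =>
    intro u hu
    have hpos : 0 < (Finset.univ.filter (fun k => u k = true)).card := by omega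
    obtain ⟨k, hkmem⟩ := Finset.card_pos.1 hpos
    have hk : u k = true := by simpa using hkmem
    set u' := Function.update u k false with hu'
    have hfil : Finset.univ.filter (fun j => u' j = true)
        = (Finset.univ.filter (fun j => u j = true)).erase k := by
      ext j
      simp only [Finset.mem_filter, Finset.mem_erase, Finset.mem_univ, true_and, hu',
        Function.update_apply]
      by_cases hj : j = k <;> simp [hj]
    have hcard : (Finset.univ.filter (fun j => u' j = true)).card = m := by
      rw [hfil, Finset.card_erase_of_mem hkmem, hu]
      omega

    have hstep : u = Function.update u' k true := by
      funext j
      rcases eq_or_ne j k with rfl | hj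
      · rw [Function.update_self]; exact hk
      · rw [Function.update_apply, if_neg hj, hu', Function.update_apply, if_neg hj]
    have h2 : (flipGraph (n+2)).Adj (Cfg hn u') (Cfg hn u) := by
      have := adj_step hn (u := u') (k := k) (by simp [hu'])
      rw [← hstep] at this
      exact this
    exact (ih u' hcard).trans h2.reachable

end

end

instance (k : ℕ) (u v : Fin k → Bool) : Decidable (cubeAdj k u v) := by
  unfold cubeAdj ExistsUnique; infer_instance

instance instDecEqV : DecidableEq (Fin 4 → Bool) := fun _ _ => inferInstanceAs (Decidable _)

def vtx (m : ℕ) : Fin 4 → Bool := fun i => decide (m / 2 ^ i.val % 2 = 1)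
def A : Fin 3 → (Fin 4 → Bool) := fun i => vtx (if i = 0 then 0 else if i = 1 then 1 else 6)
def B : Fin 3 → (Fin 4 → Bool) := fun j => vtx (if j = 0 then 2 else if j = 1 then 4 else 8)

open SimpleGraph

def w1 (a b : ℕ) (h : cubeAdj 4 (vtx a) (vtx b)) : (cubeGraph 4).Walk (vtx a) (vtx b) :=
  Walk.cons h Walk.nil
def w2 (a b c : ℕ) (h1 : cubeAdj 4 (vtx a) (vtx b)) (h2 : cubeAdj 4 (vtx b) (vtx c)) :
    (cubeGraph 4).Walk (vtx a) (vtx c) := Walk.cons h1 (Walk.cons h2 Walk.nil)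
def w3 (a b c d : ℕ) (h1 : cubeAdj 4 (vtx a) (vtx b)) (h2 : cubeAdj 4 (vtx b) (vtx c))
    (h3 : cubeAdj 4 (vtx c) (vtx d)) :
    (cubeGraph 4).Walk (vtx a) (vtx d) := Walk.cons h1 (Walk.cons h2 (Walk.cons h3 Walk.nil))

def W : (i j : Fin 3) → (cubeGraph 4).Walk (A i) (B j) := fun i j =>
  match i, j with
  | ⟨0,_⟩, ⟨0,_⟩ => w1 0 2 (by decide)
  | ⟨0,_⟩, ⟨1,_⟩ => w1 0 4 (by decide)
  | ⟨0,_⟩, ⟨2,_⟩ => w1 0 8 (by decide)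
  | ⟨1,_⟩, ⟨0,_⟩ => w2 1 3 2 (by decide) (by decide)
  | ⟨1,_⟩, ⟨1,_⟩ => w2 1 5 4 (by decide) (by decide)
  | ⟨1,_⟩, ⟨2,_⟩ => w2 1 9 8 (by decide) (by decide)
  | ⟨2,_⟩, ⟨0,_⟩ => w1 6 2 (by decide)
  | ⟨2,_⟩, ⟨1,_⟩ => w1 6 4 (by decide)
  | ⟨2,_⟩, ⟨2,_⟩ => w3 6 14 10 8 (by decide) (by decide) (by decide)

def F : Fin 3 ⊕ Fin 3 → (Fin 4 → Bool) := Sum.elim A B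

def P : ∀ u v, (completeBipartiteGraph (Fin 3) (Fin 3)).Adj u v → (cubeGraph 4).Walk (F u) (F v) :=
  fun u v =>
    match u, v with
    | .inl i, .inr j => fun _ => W i j
    | .inr j, .inl i => fun _ => (W i j).reverse
    | .inl _, .inl _ => fun h => absurd h (by simp)
    | .inr _, .inr _ => fun h => absurd h (by simp)

lemma W_isPath : ∀ i j, (W i j).IsPath := by
  intro i j
  rw [SimpleGraph.Walk.isPath_def]
  revert i j; decide

lemma W_branch : ∀ i j (w : Fin 3 ⊕ Fin 3), F w ∈ (W i j).support → w = .inl i ∨ w = .inr j := by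
  decide

lemma W_disj : ∀ i j i' j' : Fin 3, (i,j) ≠ (i',j') → ∀ x, x ∈ (W i j).support → x ∈ (W i' j').support →
    (x = A i ∨ x = B j) ∧ (x = A i' ∨ x = B j') := by decide

lemma cube_contains_K33 :
    ContainsSubdivision (cubeGraph 4) (completeBipartiteGraph (Fin 3) (Fin 3)) := by
  refine ⟨F, by decide, P, ?_, ?_, ?_⟩
  · rintro (i|i) (j|j) h
    · simp at h
    · exact W_isPath i j
    · exact (W_isPath j i).reverse
    · simp at h
  · rintro (i|i) (j|j) h w hw
    · simp at h
    · rcases W_branch i j w hw with h'|h' <;> simp [h']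
    · change F w ∈ (W j i).reverse.support at hw
      rw [Walk.support_reverse, List.mem_reverse] at hw
      rcases W_branch j i w hw with h'|h' <;> simp [h']
    · simp at h
  · rintro (i|i) (j|j) h1 (i'|i') (j'|j') h2 hne x hx1 hx2
    · exact absurd h1 (by simp)
    · exact absurd h1 (by simp)
    · exact absurd h1 (by simp)
    · exact absurd h1 (by simp)
    · exact absurd h2 (by simp)
    · refine W_disj i j i' j' ?_ x hx1 hx2
      intro he; apply hne
      simp only [Prod.mk.injEq] at he
      simp [he.1, he.2]
    · change x ∈ (W j' i').reverse.support at hx2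
      rw [SimpleGraph.Walk.support_reverse, List.mem_reverse] at hx2
      have := W_disj i j j' i' ?_ x hx1 hx2
      · exact ⟨this.1, this.2.symm⟩
      · intro he; apply hne; simp only [Prod.mk.injEq] at he; simp [he.1, he.2, Sym2.eq_swap]
    · exact absurd h2 (by simp)
    · exact absurd h2 (by simp)
    · change x ∈ (W j i).reverse.support at hx1
      rw [SimpleGraph.Walk.support_reverse, List.mem_reverse] at hx1
      have := W_disj j i i' j' ?_ x hx1 hx2
      · exact ⟨this.1.symm, this.2⟩
      · intro he; apply hne; simp only [Prod.mk.injEq] at he; simp [he.1, he.2, Sym2.eq_swap]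
    · change x ∈ (W j i).reverse.support at hx1
      rw [SimpleGraph.Walk.support_reverse, List.mem_reverse] at hx1
      change x ∈ (W j' i').reverse.support at hx2
      rw [SimpleGraph.Walk.support_reverse, List.mem_reverse] at hx2
      have := W_disj j i j' i' ?_ x hx1 hx2
      · exact ⟨this.1.symm, this.2.symm⟩
      · intro he; apply hne; simp only [Prod.mk.injEq] at he; simp [he.1, he.2]
    · exact absurd h2 (by simp)
    · exact absurd h1 (by simp)
    · exact absurd h1 (by simp)
    · exact absurd h1 (by simp)
    · exact absurd h1 (by simp)


lemma transfer_subdivision {V X W' : Type*} {G : SimpleGraph V} {G' : SimpleGraph X}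
    {H : SimpleGraph W'} (g : V → X) (hg : Function.Injective g)
    (hadj : ∀ a b, G.Adj a b → G'.Adj (g a) (g b))
    (h : ContainsSubdivision G H) : ContainsSubdivision G' H := by
  obtain ⟨f, hf, P, hpath, hbranch, hdisj⟩ := h
  let hom : G →g G' := ⟨g, fun {a b} hab => hadj a b hab⟩
  refine ⟨g ∘ f, hg.comp hf, fun u v h => (P u v h).map hom, ?_, ?_, ?_⟩
  · intro u v h
    exact SimpleGraph.Walk.map_isPath_of_injective hg (hpath u v h)
  · intro u v h w hw
    rw [SimpleGraph.Walk.support_map, List.mem_map] at hw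
    obtain ⟨z, hz, hzg⟩ := hw
    have hzz : z = f w := hg hzg
    exact hbranch u v h w (hzz ▸ hz)
  · intro u1 v1 h1 u2 v2 h2 hne x hx1 hx2
    rw [SimpleGraph.Walk.support_map, List.mem_map] at hx1 hx2
    obtain ⟨z1, hz1, rfl⟩ := hx1
    obtain ⟨z2, hz2, hz⟩ := hx2
    have hzz : z2 = z1 := hg hz
    subst hzz
    obtain ⟨ha, hb⟩ := hdisj u1 v1 h1 u2 v2 h2 hne _ hz1 hz2
    constructor
    · rcases ha with h'|h'
      · exact Or.inl (by rw [h']; rfl)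
      · exact Or.inr (by rw [h']; rfl)
    · rcases hb with h'|h'
      · exact Or.inl (by rw [h']; rfl)
      · exact Or.inr (by rw [h']; rfl)


/-- For `n ≥ 8`, the 2-coloured flip graph of a convex `(n+2)`-gon has a connected
component which is not planar. -/
theorem nonplanar_component (n : ℕ) (hn : 8 ≤ n) :
    ∃ C : ColouredTri (n + 2) 2,
      ¬ IsPlanar ((flipGraph (n + 2)).induce
          {C' : ColouredTri (n + 2) 2 | (flipGraph (n + 2)).Reachable C C'}) := by
  refine ⟨Cfg hn (fun _ => false), ?_⟩
  rintro ⟨-, h33⟩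
  apply h33
  let g : (Fin 4 → Bool) →
      {C' : ColouredTri (n + 2) 2 | (flipGraph (n + 2)).Reachable (Cfg hn (fun _ => false)) C'} :=
    fun u => ⟨Cfg hn u, cfg_reachable hn u⟩
  refine transfer_subdivision g ?_ ?_ cube_contains_K33
  · intro a b hab
    exact cfg_injective hn (congrArg Subtype.val hab)
  · intro a b hab
    exact (SimpleGraph.comap_adj).2 (adj_of_cubeAdj hn hab)

end PolyFlip
end
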